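/- Let G=(V,E) be a redundant-free st-DAG with at least two vertices, with source s and target t. Let X_s be the set of all edges with start vertex s and X_t the set of all edges with end vertex t. Then for every Maximum Syncpoint Y of G with Y ≠ X_s, there exists an st-path (e_1,…,e_l) and indices 1 ≤ i < j ≤ l with e_i ∈ X_s and e_j ∈ Y; and for every Maximum Syncpoint Y of G with Y ≠ X_t, there exists an st-path (e_1,…,e_l) and indices 1 ≤ i < j ≤ l with e_i ∈ Y and e_j ∈ X_t. (In other words, in the precedence relation among Maximum Syncpoints, X_s precedes every other MSP and every other MSP precedes X_t.) -/

import Mathlib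

open Set

variable {V : Type*}

/-- Predecessor set of a vertex. -/
def preds (E : Set (V × V)) (v : V) : Set V := {u | (u, v) ∈ E}

/-- Successor set of a vertex. -/
def succs (E : Set (V × V)) (u : V) : Set V := {w | (u, w) ∈ E}

/-- A digraph is acyclic: no vertex lies on a nonempty directed cycle. -/
def IsAcyclicDigraph (E : Set (V × V)) : Prop :=
  ∀ v : V, ¬ Relation.TransGen (fun a b => (a, b) ∈ E) v v

/-- `s` is the unique vertex with no incoming edge. -/
def IsSourceOf (E : Set (V × V)) (s : V) : Prop :=
  preds E s = ∅ ∧ ∀ v, preds E v = ∅ → v = s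

/-- `t` is the unique vertex with no outgoing edge. -/
def IsTargetOf (E : Set (V × V)) (t : V) : Prop :=
  succs E t = ∅ ∧ ∀ v, succs E v = ∅ → v = t

/-- A set of in-twins: all elements have the identical set of predecessors. -/
def InTwins (E : Set (V × V)) (S : Set V) : Prop :=
  ∀ v ∈ S, ∀ w ∈ S, preds E v = preds E w

/-- A set of out-twins: all elements have the identical set of successors. -/
def OutTwins (E : Set (V × V)) (P : Set V) : Prop :=
  ∀ u ∈ P, ∀ w ∈ P, succs E u = succs E w

/-- `P_X`: the set of start vertices of the edges of `X`. -/
def startSet (X : Set (V × V)) : Set V := {u | ∃ v, (u, v) ∈ X}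

/-- `S_X`: the set of end vertices of the edges of `X`. -/
def endSet (X : Set (V × V)) : Set V := {v | ∃ u, (u, v) ∈ X}

/-- Condition (a) of the syncpoint definition. -/
def CondA (E X : Set (V × V)) : Prop :=
  (∀ u ∈ startSet X, ∀ v ∈ endSet X, (u, v) ∈ E → (u, v) ∈ X) ∧
  ((endSet X).ncard = 1 ∨ InTwins E (endSet X)) ∧
  (∀ v ∈ endSet X, preds E v = startSet X)

/-- Condition (b) of the syncpoint definition. -/
def CondB (E X : Set (V × V)) : Prop :=
  (∀ u ∈ startSet X, ∀ v ∈ endSet X, (u, v) ∈ E → (u, v) ∈ X) ∧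
  ((startSet X).ncard = 1 ∨ OutTwins E (startSet X)) ∧
  (∀ u ∈ startSet X, succs E u = endSet X)

/-- Fullsyncpoint: a nonempty edge set satisfying both (a) and (b). -/
def IsFSP (E X : Set (V × V)) : Prop :=
  X.Nonempty ∧ X ⊆ E ∧ CondA E X ∧ CondB E X

/-- Forward-Halfsyncpoint: (a) holds and `|S_X| ≥ 2`. -/
def IsFHSP (E X : Set (V × V)) : Prop :=
  X.Nonempty ∧ X ⊆ E ∧ CondA E X ∧ 2 ≤ (endSet X).ncard

/-- Backward-Halfsyncpoint: (b) holds and `|P_X| ≥ 2`. -/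
def IsBHSP (E X : Set (V × V)) : Prop :=
  X.Nonempty ∧ X ⊆ E ∧ CondB E X ∧ 2 ≤ (startSet X).ncard

/-- A syncpoint is an FSP, FHSP or BHSP. -/
def IsSyncpoint (E X : Set (V × V)) : Prop :=
  IsFSP E X ∨ IsFHSP E X ∨ IsBHSP E X

/-- Maximum Syncpoint: a syncpoint that is not a proper subset of another syncpoint. -/
def IsMSP (E X : Set (V × V)) : Prop :=
  IsSyncpoint E X ∧ ∀ Y, IsSyncpoint E Y → ¬ X ⊂ Y

/-- An edge-path: a nonempty list of edges, consecutive edges sharing endpoints. -/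
def IsEdgePath (E : Set (V × V)) (p : List (V × V)) : Prop :=
  p ≠ [] ∧ (∀ e ∈ p, e ∈ E) ∧ p.Chain' (fun e f => e.2 = f.1)

/-- The vertex-path of an edge-path. -/
def vertexPath (p : List (V × V)) : List V :=
  match p with
  | [] => []
  | e :: rest => e.1 :: (e :: rest).map Prod.snd

/-- An st-path: an edge-path starting at `s` and ending at `t`. -/
def IsStPath (E : Set (V × V)) (s t : V) (p : List (V × V)) : Prop :=
  IsEdgePath E p ∧ (∃ e, p.head? = some e ∧ e.1 = s) ∧
    (∃ e, p.getLast? = some e ∧ e.2 = t)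

/-- An edge `(u,v) ∈ E` is redundant if there is a directed path from `u` to `v`
not containing the edge `(u,v)`. -/
def IsRedundant (E : Set (V × V)) (e : V × V) : Prop :=
  e ∈ E ∧ ∃ p, IsEdgePath E p ∧ e ∉ p ∧
    (∃ f, p.head? = some f ∧ f.1 = e.1) ∧ (∃ f, p.getLast? = some f ∧ f.2 = e.2)

/-- A graph is redundant-free if it has no redundant edge. -/
def RedundantFree (E : Set (V × V)) : Prop := ∀ e, ¬ IsRedundant E e

/-- Entry vertices of the subgraph induced by `V'` (in an st-DAG with source `s`). -/
def entrySet (E : Set (V × V)) (s : V) (V' : Set V) : Set V :=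
  {v | v ∈ V' ∧ ((∃ u, u ∉ V' ∧ (u, v) ∈ E) ∨ v = s)}

/-- Exit vertices of the subgraph induced by `V'` (in an st-DAG with target `t`). -/
def exitSet (E : Set (V × V)) (t : V) (V' : Set V) : Set V :=
  {v | v ∈ V' ∧ ((∃ w, w ∉ V' ∧ (v, w) ∈ E) ∨ v = t)}

/-- The induced subgraph of `V'` is a cluster. -/
def IsCluster (E : Set (V × V)) (s t : V) (V' : Set V) : Prop :=
  2 ≤ (entrySet E s V').ncard ∧ 2 ≤ (exitSet E t V').ncard ∧
  entrySet E s V' ∩ exitSet E t V' = ∅ ∧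
  InTwins E (entrySet E s V') ∧ OutTwins E (exitSet E t V')



/-- An auxiliary notion of a walk in a digraph. -/
inductive AuxWalk (E : Set (V × V)) : V → V → List (V × V) → Prop
  | nil (a : V) : AuxWalk E a a []
  | cons {a b c : V} {p : List (V × V)} (h : (a, b) ∈ E) (hw : AuxWalk E b c p) :
      AuxWalk E a c ((a, b) :: p)

namespace AuxWalk

variable {E : Set (V × V)} {a b c : V} {p q : List (V × V)}

lemma edges (hw : AuxWalk E a c p) : ∀ e ∈ p, e ∈ E := by
  induction hw with
  | nil => simp
  | cons h hw ih =>
      intro e he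
      rcases List.mem_cons.1 he with rfl | he
      · exact h
      · exact ih e he

lemma chain (hw : AuxWalk E a c p) : p.Chain' (fun e f => e.2 = f.1) := by
  induction hw with
  | nil => exact List.IsChain.nil
  | cons h hw ih =>
      rcases hw with _ | @⟨x, y, z, q, hxy, hw'⟩
      · exact List.IsChain.singleton _
      · exact List.IsChain.cons_cons rfl ih

lemma head_eq (hw : AuxWalk E a c p) (hne : p ≠ []) :
    ∃ e, p.head? = some e ∧ e.1 = a := by
  rcases hw with _ | ⟨h, hw⟩
  · exact absurd rfl hne
  · exact ⟨_, rfl, rfl⟩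

lemma getLast_eq (hw : AuxWalk E a c p) (hne : p ≠ []) :
    ∃ e, p.getLast? = some e ∧ e.2 = c := by
  induction hw with
  | nil => exact absurd rfl hne
  | @cons x y z q h hw ih =>
      rcases q with _ | ⟨f, q⟩
      · rcases hw with _ | _
        exact ⟨(x, y), rfl, rfl⟩
      · obtain ⟨e, he, he2⟩ := ih (by simp)
        exact ⟨e, by rw [List.getLast?_cons_cons]; exact he, he2⟩

lemma append (hw : AuxWalk E a b p) (hw' : AuxWalk E b c q) :
    AuxWalk E a c (p ++ q) := by
  induction hw with
  | nil => exact hw'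
  | cons h hw ih => exact AuxWalk.cons h (ih hw')

lemma ne_nil (hw : AuxWalk E a c p) (h : a ≠ c) : p ≠ [] := by
  rcases hw with _ | _
  · exact absurd rfl h
  · simp

lemma rtg (hw : AuxWalk E a c p) :
    Relation.ReflTransGen (fun x y => (x, y) ∈ E) a c := by
  induction hw with
  | nil => exact Relation.ReflTransGen.refl
  | cons h _ ih => exact Relation.ReflTransGen.head h ih

lemma rtg_of_mem (hw : AuxWalk E a c p) {x y : V} (hmem : (x, y) ∈ p) :
    Relation.ReflTransGen (fun u v => (u, v) ∈ E) y c := by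
  induction hw with
  | nil => simp at hmem
  | cons h hw ih =>
      rcases List.mem_cons.1 hmem with he | he
      · obtain ⟨rfl, rfl⟩ := Prod.mk.inj he
        exact hw.rtg
      · exact ih he

lemma rtg_to_mem (hw : AuxWalk E a c p) {x y : V} (hmem : (x, y) ∈ p) :
    Relation.ReflTransGen (fun u v => (u, v) ∈ E) a x := by
  induction hw with
  | nil => simp at hmem
  | cons h hw ih =>
      rcases List.mem_cons.1 hmem with he | he
      · obtain ⟨rfl, rfl⟩ := Prod.mk.inj he
        exact Relation.ReflTransGen.refl
      · exact Relation.ReflTransGen.head h (ih he)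

end AuxWalk

section Reach

variable [Fintype V] {E : Set (V × V)} {s t : V}

lemma aux_wf_pred (hacyc : IsAcyclicDigraph E) :
    WellFounded (fun u v : V => (u, v) ∈ E) := by
  have hirr : IsIrrefl V (Relation.TransGen fun a b : V => (a, b) ∈ E) := ⟨hacyc⟩
  exact Subrelation.wf (r := Relation.TransGen fun a b : V => (a, b) ∈ E)
    (fun h => Relation.TransGen.single h)
    (Finite.wellFounded_of_trans_of_irrefl _)

lemma aux_wf_succ (hacyc : IsAcyclicDigraph E) :
    WellFounded (fun u v : V => (v, u) ∈ E) := by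
  have htr : IsTrans V (fun a b : V => Relation.TransGen (fun x y : V => (x, y) ∈ E) b a) :=
    ⟨fun a b c h1 h2 => h2.trans h1⟩
  have hirr : IsIrrefl V (fun a b : V => Relation.TransGen (fun x y : V => (x, y) ∈ E) b a) :=
    ⟨hacyc⟩
  exact Subrelation.wf
    (r := fun a b : V => Relation.TransGen (fun x y : V => (x, y) ∈ E) b a)
    (fun h => Relation.TransGen.single h)
    (Finite.wellFounded_of_trans_of_irrefl _)

lemma walk_from_source (hacyc : IsAcyclicDigraph E) (hs : IsSourceOf E s) (v : V) :
    ∃ p, AuxWalk E s v p := by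
  refine (aux_wf_pred hacyc).induction (C := fun v => ∃ p, AuxWalk E s v p) v ?_
  intro v ih
  by_cases hv : v = s
  · exact ⟨[], hv ▸ AuxWalk.nil v⟩
  · have : preds E v ≠ ∅ := fun h => hv (hs.2 v h)
    obtain ⟨u, hu⟩ := Set.nonempty_iff_ne_empty.2 this
    obtain ⟨p, hp⟩ := ih u hu
    exact ⟨p ++ [(u, v)], hp.append (AuxWalk.cons hu (AuxWalk.nil v))⟩

lemma walk_to_target (hacyc : IsAcyclicDigraph E) (ht : IsTargetOf E t) (v : V) :
    ∃ p, AuxWalk E v t p := by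
  refine (aux_wf_succ hacyc).induction (C := fun v => ∃ p, AuxWalk E v t p) v ?_
  intro v ih
  by_cases hv : v = t
  · exact ⟨[], hv ▸ AuxWalk.nil v⟩
  · have : succs E v ≠ ∅ := fun h => hv (ht.2 v h)
    obtain ⟨w, hw⟩ := Set.nonempty_iff_ne_empty.2 this
    obtain ⟨p, hp⟩ := ih w hw
    exact ⟨(v, w) :: p, AuxWalk.cons hw hp⟩

end Reach

section Sync

variable [Fintype V] {E : Set (V × V)} {s t : V}

lemma pred_eq_source (hacyc : IsAcyclicDigraph E) (hs : IsSourceOf E s)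
    (hred : RedundantFree E) {u v : V} (hsv : (s, v) ∈ E) (huv : (u, v) ∈ E) :
    u = s := by
  by_contra hus
  obtain ⟨p1, hp1⟩ := walk_from_source hacyc hs u
  have hp1ne : p1 ≠ [] := hp1.ne_nil (Ne.symm hus)
  set p := p1 ++ [(u, v)] with hp
  have hwalk : AuxWalk E s v p := hp1.append (AuxWalk.cons huv (AuxWalk.nil v))
  have hpne : p ≠ [] := by simp [hp]
  have hnotmem : (s, v) ∉ p := by
    intro hmem
    rcases List.mem_append.1 hmem with hmem | hmem
    · have h1 := hp1.rtg_of_mem hmem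
      exact hacyc v (Relation.TransGen.tail' h1 huv)
    · simp at hmem
      exact hus hmem.symm
  obtain ⟨e1, he1, he1'⟩ := hwalk.head_eq hpne
  obtain ⟨e2, he2, he2'⟩ := hwalk.getLast_eq hpne
  exact hred (s, v) ⟨hsv, p, ⟨hpne, hwalk.edges, hwalk.chain⟩, hnotmem,
    ⟨e1, he1, he1'⟩, ⟨e2, he2, he2'⟩⟩

lemma succ_eq_target (hacyc : IsAcyclicDigraph E) (ht : IsTargetOf E t)
    (hred : RedundantFree E) {u w : V} (hut : (u, t) ∈ E) (huw : (u, w) ∈ E) :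
    w = t := by
  by_contra hwt
  obtain ⟨p2, hp2⟩ := walk_to_target hacyc ht w
  have hp2ne : p2 ≠ [] := hp2.ne_nil hwt
  set p := (u, w) :: p2 with hp
  have hwalk : AuxWalk E u t p := AuxWalk.cons huw hp2
  have hpne : p ≠ [] := by simp [hp]
  have hnotmem : (u, t) ∉ p := by
    intro hmem
    rcases List.mem_cons.1 hmem with hmem | hmem
    · exact hwt (Prod.mk.inj hmem).2.symm
    · have h1 := hp2.rtg_to_mem hmem
      exact hacyc u (Relation.TransGen.head' huw h1)
  obtain ⟨e1, he1, he1'⟩ := hwalk.head_eq hpne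
  obtain ⟨e2, he2, he2'⟩ := hwalk.getLast_eq hpne
  exact hred (u, t) ⟨hut, p, ⟨hpne, hwalk.edges, hwalk.chain⟩, hnotmem,
    ⟨e1, he1, he1'⟩, ⟨e2, he2, he2'⟩⟩

lemma source_edge_exists (hacyc : IsAcyclicDigraph E) (hs : IsSourceOf E s)
    (hcard : 2 ≤ Fintype.card V) : ∃ v, (s, v) ∈ E := by
  obtain ⟨v, hv⟩ := Fintype.exists_ne_of_one_lt_card (by omega) s
  obtain ⟨p, hp⟩ := walk_from_source hacyc hs v
  rcases hp with _ | ⟨h, _⟩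
  · exact absurd rfl hv
  · exact ⟨_, h⟩

lemma target_edge_exists (hacyc : IsAcyclicDigraph E) (ht : IsTargetOf E t)
    (hcard : 2 ≤ Fintype.card V) : ∃ u, (u, t) ∈ E := by
  obtain ⟨v, hv⟩ := Fintype.exists_ne_of_one_lt_card (by omega) t
  obtain ⟨p, hp⟩ := walk_to_target hacyc ht v
  have hpne : p ≠ [] := hp.ne_nil hv
  obtain ⟨e, he, he2⟩ := hp.getLast_eq hpne
  have hmem : e ∈ p := by obtain ⟨h4, rfl⟩ := List.mem_getLast?_eq_getLast he; exact List.getLast_mem h4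
  have h3 := hp.edges e hmem
  exact ⟨e.1, by rw [← he2]; simpa using h3⟩

lemma Xs_syncpoint (hacyc : IsAcyclicDigraph E) (hs : IsSourceOf E s)
    (hred : RedundantFree E) (hcard : 2 ≤ Fintype.card V) :
    IsSyncpoint E {e | e ∈ E ∧ e.1 = s} := by
  obtain ⟨v0, hv0⟩ := source_edge_exists hacyc hs hcard
  set X : Set (V × V) := {e | e ∈ E ∧ e.1 = s} with hX
  have hstart : startSet X = {s} := by
    ext u
    constructor
    · rintro ⟨v, hv, rfl⟩; rfl
    · rintro rfl; exact ⟨v0, hv0, rfl⟩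
  have hend : endSet X = succs E s := by
    ext v
    constructor
    · rintro ⟨u, hu, rfl⟩; exact hu
    · intro h; exact ⟨s, h, rfl⟩
  have hpredseq : ∀ v ∈ endSet X, preds E v = {s} := by
    intro v hv
    rw [hend] at hv
    ext u
    constructor
    · intro hu; exact pred_eq_source hacyc hs hred hv hu
    · rintro rfl; exact hv
  refine Or.inl ⟨⟨(s, v0), hv0, rfl⟩, fun e he => he.1, ?_, ?_⟩
  · refine ⟨fun u hu v hv huv => ⟨huv, by rw [hstart] at hu; exact hu⟩,
      Or.inr fun v hv w hw => by rw [hpredseq v hv, hpredseq w hw], fun v hv => ?_⟩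
    rw [hpredseq v hv, hstart]
  · refine ⟨fun u hu v hv huv => ⟨huv, by rw [hstart] at hu; exact hu⟩,
      Or.inl (by rw [hstart]; exact Set.ncard_singleton s), fun u hu => ?_⟩
    rw [hstart] at hu
    subst hu
    rw [hend]

lemma Xt_syncpoint (hacyc : IsAcyclicDigraph E) (ht : IsTargetOf E t)
    (hred : RedundantFree E) (hcard : 2 ≤ Fintype.card V) :
    IsSyncpoint E {e | e ∈ E ∧ e.2 = t} := by
  obtain ⟨u0, hu0⟩ := target_edge_exists hacyc ht hcard
  set X : Set (V × V) := {e | e ∈ E ∧ e.2 = t} with hX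
  have hendt : endSet X = {t} := by
    ext v
    constructor
    · rintro ⟨u, hu, rfl⟩; rfl
    · rintro rfl; exact ⟨u0, hu0, rfl⟩
  have hstartt : startSet X = preds E t := by
    ext u
    constructor
    · rintro ⟨v, hv, rfl⟩; exact hv
    · intro h; exact ⟨t, h, rfl⟩
  have hsuccseq : ∀ u ∈ startSet X, succs E u = {t} := by
    intro u hu
    rw [hstartt] at hu
    ext w
    constructor
    · intro hw; exact succ_eq_target hacyc ht hred hu hw
    · rintro rfl; exact hu
  refine Or.inl ⟨⟨(u0, t), hu0, rfl⟩, fun e he => he.1, ?_, ?_⟩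
  · refine ⟨fun u hu v hv huv => ⟨huv, by rw [hendt] at hv; exact hv⟩,
      Or.inl (by rw [hendt]; exact Set.ncard_singleton t), fun v hv => ?_⟩
    rw [hendt] at hv
    subst hv
    rw [hstartt]
  · refine ⟨fun u hu v hv huv => ⟨huv, by rw [hendt] at hv; exact hv⟩,
      Or.inr fun u hu w hw => by rw [hsuccseq u hu, hsuccseq w hw], fun u hu => ?_⟩
    rw [hsuccseq u hu, hendt]

omit [Fintype V] in
lemma syncpoint_nonempty_subset {X : Set (V × V)} (h : IsSyncpoint E X) :
    X.Nonempty ∧ X ⊆ E := by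
  rcases h with h | h | h <;> exact ⟨h.1, h.2.1⟩

end Sync
/-- The source MSP precedes every other MSP, and every other MSP
precedes the target MSP, via suitable st-paths. -/
theorem source_msp_precedes_all_and_all_precede_target_msp
    {V : Type*} [Fintype V] [Nonempty V] (E : Set (V × V)) (s t : V)
    (hacyc : IsAcyclicDigraph E) (hs : IsSourceOf E s) (ht : IsTargetOf E t)
    (hred : RedundantFree E) (hcard : 2 ≤ Fintype.card V) :
    (∀ Y : Set (V × V), IsMSP E Y → Y ≠ {e | e ∈ E ∧ e.1 = s} →
      ∃ p : List (V × V), IsStPath E s t p ∧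
        ∃ i j : ℕ, i < j ∧ ∃ (hi : i < p.length) (hj : j < p.length),
          p.get ⟨i, hi⟩ ∈ {e | e ∈ E ∧ e.1 = s} ∧ p.get ⟨j, hj⟩ ∈ Y) ∧
    (∀ Y : Set (V × V), IsMSP E Y → Y ≠ {e | e ∈ E ∧ e.2 = t} →
      ∃ p : List (V × V), IsStPath E s t p ∧
        ∃ i j : ℕ, i < j ∧ ∃ (hi : i < p.length) (hj : j < p.length),
          p.get ⟨i, hi⟩ ∈ Y ∧ p.get ⟨j, hj⟩ ∈ {e | e ∈ E ∧ e.2 = t}) := by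
  constructor
  · intro Y hY hYne
    obtain ⟨hYne', hYE⟩ := syncpoint_nonempty_subset hY.1
    have hex : ∃ e ∈ Y, e.1 ≠ s := by
      by_contra h
      push_neg at h
      have hsub : Y ⊆ {e | e ∈ E ∧ e.1 = s} := fun e he => ⟨hYE he, h e he⟩
      exact hY.2 _ (Xs_syncpoint hacyc hs hred hcard) (hsub.ssubset_of_ne hYne)
    obtain ⟨⟨u, v⟩, hYuv, hus⟩ := hex
    obtain ⟨p1, hp1⟩ := walk_from_source hacyc hs u
    have hp1ne : p1 ≠ [] := hp1.ne_nil (Ne.symm hus)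
    obtain ⟨p2, hp2⟩ := walk_to_target hacyc ht v
    set p := p1 ++ (u, v) :: p2 with hp
    have hwalk : AuxWalk E s t p := hp1.append (AuxWalk.cons (hYE hYuv) hp2)
    have hpne : p ≠ [] := by simp [hp]
    have hlen1 : 0 < p1.length := List.length_pos_iff.2 hp1ne
    have hlenp : p.length = p1.length + (p2.length + 1) := by
      simp [hp, List.length_append]
    refine ⟨p, ⟨⟨hpne, hwalk.edges, hwalk.chain⟩, hwalk.head_eq hpne,
      hwalk.getLast_eq hpne⟩, 0, p1.length, hlen1, by omega, by omega, ?_, ?_⟩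
    · obtain ⟨e, he, he1⟩ := hwalk.head_eq hpne
      have h0 : p.get ⟨0, by omega⟩ = e := by
        rw [List.get_eq_getElem, List.getElem_zero (by omega)]
        rw [List.head?_eq_head hpne] at he
        exact Option.some_injective _ he
      rw [h0]
      refine ⟨hwalk.edges e ?_, he1⟩
      · rw [← h0]
        exact List.get_mem ..
    · have hj : p.get ⟨p1.length, by omega⟩ = (u, v) := by
        rw [List.get_eq_getElem]
        simp only [hp]
        rw [List.getElem_append_right le_rfl]
        simp
      rw [hj]
      exact hYuv
  · intro Y hY hYne
    obtain ⟨hYne', hYE⟩ := syncpoint_nonempty_subset hY.1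
    have hex : ∃ e ∈ Y, e.2 ≠ t := by
      by_contra h
      push_neg at h
      have hsub : Y ⊆ {e | e ∈ E ∧ e.2 = t} := fun e he => ⟨hYE he, h e he⟩
      exact hY.2 _ (Xt_syncpoint hacyc ht hred hcard) (hsub.ssubset_of_ne hYne)
    obtain ⟨⟨u, v⟩, hYuv, hvt⟩ := hex
    obtain ⟨p1, hp1⟩ := walk_from_source hacyc hs u
    obtain ⟨p2, hp2⟩ := walk_to_target hacyc ht v
    have hp2ne : p2 ≠ [] := hp2.ne_nil hvt
    have hlen2 : 0 < p2.length := List.length_pos_iff.2 hp2ne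
    set p := p1 ++ (u, v) :: p2 with hp
    have hwalk : AuxWalk E s t p := hp1.append (AuxWalk.cons (hYE hYuv) hp2)
    have hpne : p ≠ [] := by simp [hp]
    have hlenp : p.length = p1.length + (p2.length + 1) := by
      simp [hp, List.length_append]
    refine ⟨p, ⟨⟨hpne, hwalk.edges, hwalk.chain⟩, hwalk.head_eq hpne,
      hwalk.getLast_eq hpne⟩, p1.length, p.length - 1, by omega, by omega, by omega,
      ?_, ?_⟩
    · have hj : p.get ⟨p1.length, by omega⟩ = (u, v) := by
        rw [List.get_eq_getElem]
        simp only [hp]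
        rw [List.getElem_append_right le_rfl]
        simp
      rw [hj]
      exact hYuv
    · obtain ⟨e, he, he2⟩ := hwalk.getLast_eq hpne
      have h0 : p.get ⟨p.length - 1, by omega⟩ = e := by
        rw [List.get_eq_getElem, ← List.getLast_eq_getElem hpne]
        rw [List.getLast?_eq_getLast hpne] at he
        exact Option.some_injective _ he
      rw [h0]
      refine ⟨hwalk.edges e ?_, he2⟩
      rw [← h0]
      exact List.get_mem ..
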